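/- arXiv:math/0406117 — 2 statements merged into one kernel-verified Lean document; each statement's English description precedes it below -/
import Mathlib

section
/- Let n \ge 2. For every q with 1 \le q \le n-1 and all positive integers n_1, \ldots, n_{q+1}, the following identity holds: -\binom{n_1+1}{q} + \sum_{k=1}^{q} (-1)^{k+1} \sum \binom{n_1+1}{m_1}\cdots\binom{n_k+1}{m_k} \binom{n_1+\cdots+n_{k+1}+1}{q-k} = 0, where the inner sum is over all k-tuples (m_1, \ldots, m_k) of non-negative integers with m_1+\cdots+m_k = k and m_1+\cdots+m_h \ge h for all h = 1, \ldots, k-1. -/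
open Finset Polynomial

/-- `Mset k` is the set of `k`-tuples `(m_1, …, m_k)` of non-negative integers with
`m_1 + ⋯ + m_k = k` and `m_1 + ⋯ + m_h ≥ h` for all `h = 1, …, k-1`. -/
def Mset (k : ℕ) : Finset (Fin k → ℕ) :=
  (Finset.Nat.antidiagonalTuple k k).filter
    (fun m => ∀ h < k, h ≤ ∑ i ∈ Finset.univ.filter (fun i : Fin k => (i : ℕ) < h), m i)

def Gf : ℕ → (ℕ → ℕ) → ℕ → ℕ → ℤ
  | 0, _, _, c => if c = 0 then 1 else 0
  | l + 1, b, s, c =>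
      ∑ t ∈ Finset.range (c + 1),
        if 1 ≤ s + t then
          ((b 0 + 1).choose t : ℤ) * Gf l (fun i => b (i + 1)) (s + t - 1) (c - t)
        else 0

lemma Gf_succ (l : ℕ) (b : ℕ → ℕ) (s c : ℕ) :
    Gf (l + 1) b s c = ∑ t ∈ Finset.range (c + 1),
        if 1 ≤ s + t then
          ((b 0 + 1).choose t : ℤ) * Gf l (fun i => b (i + 1)) (s + t - 1) (c - t)
        else 0 := rfl

def Topf (b : ℕ → ℕ) (s k : ℕ) : ℕ := (∑ i ∈ Finset.range (k + 1), b i) + 1 + s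

noncomputable def Ft (b : ℕ → ℕ) (s k : ℕ) : Polynomial ℤ :=
  Polynomial.C ((-1) ^ k * Gf k b s (k - s)) * Polynomial.X ^ (k - s)
    * (Polynomial.X + 1) ^ (Topf b s k)

noncomputable def Pp (b : ℕ → ℕ) (s q : ℕ) : Polynomial ℤ :=
  ∑ k ∈ Finset.Icc s (q + s), Ft b s k

noncomputable def Wt (b : ℕ → ℕ) (t : ℕ) : Polynomial ℤ :=
  Polynomial.C ((b 0 + 1).choose t : ℤ) * Polynomial.X ^ t
    * (Polynomial.X + 1) ^ (b 0 + 1 - t)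

noncomputable def btTerm (a t : ℕ) : Polynomial ℤ :=
  Polynomial.C ((-1) ^ t * (a.choose t : ℤ)) * Polynomial.X ^ t
    * (Polynomial.X + 1) ^ (a - t)

lemma sum_antidiagonalTuple_succ {M : Type*} [AddCommMonoid M] {l c : ℕ}
    (f : (Fin (l + 1) → ℕ) → M) :
    ∑ m ∈ Finset.Nat.antidiagonalTuple (l + 1) c, f m
      = ∑ t ∈ Finset.range (c + 1), ∑ m ∈ Finset.Nat.antidiagonalTuple l (c - t),
          f (Fin.cons t m) := by
  rw [← Finset.sum_sigma (Finset.range (c+1)) (fun t => Finset.Nat.antidiagonalTuple l (c - t))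
      (fun x => f (Fin.cons x.1 x.2))]
  refine Finset.sum_nbij' (fun m => (⟨m 0, Fin.tail m⟩ : Σ _ : ℕ, Fin l → ℕ))
    (fun x => Fin.cons x.1 x.2) ?_ ?_ ?_ ?_ ?_
  · intro m hm
    rw [Finset.Nat.mem_antidiagonalTuple] at hm
    simp only [Finset.mem_sigma, Finset.mem_range, Finset.Nat.mem_antidiagonalTuple]
    have h1 : m 0 ≤ ∑ i, m i := Finset.single_le_sum (fun i _ => Nat.zero_le _) (Finset.mem_univ 0)
    rw [Fin.sum_univ_succ] at hm
    have h2 : ∑ i : Fin l, Fin.tail m i = ∑ i : Fin l, m i.succ := rfl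
    constructor
    · omega
    · omega
  · intro x hx
    simp only [Finset.mem_sigma, Finset.mem_range, Finset.Nat.mem_antidiagonalTuple] at hx
    rw [Finset.Nat.mem_antidiagonalTuple, Fin.sum_cons]
    omega
  · intro m _
    simp [Fin.cons_self_tail]
  · intro x hx
    ext
    · simp
    · simp [Fin.tail_cons]
  · intro m _
    simp [Fin.cons_self_tail]

lemma partial_cons {l : ℕ} (t : ℕ) (m : Fin l → ℕ) (h : ℕ) :
    ∑ i ∈ Finset.univ.filter (fun i : Fin (l + 1) => (i : ℕ) < h + 1), (Fin.cons t m) i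
      = t + ∑ i ∈ Finset.univ.filter (fun i : Fin l => (i : ℕ) < h), m i := by
  rw [Finset.sum_filter, Finset.sum_filter, Fin.sum_univ_succ]
  simp [Fin.val_succ, Nat.succ_lt_succ_iff]

lemma cond_cons_iff {l : ℕ} (s t : ℕ) (m : Fin l → ℕ) :
    (∀ h ≤ l + 1, h ≤ s + ∑ i ∈ Finset.univ.filter (fun i : Fin (l+1) => (i : ℕ) < h),
        (Fin.cons t m) i)
      ↔ (1 ≤ s + t ∧ ∀ h ≤ l, h ≤ (s + t - 1)
          + ∑ i ∈ Finset.univ.filter (fun i : Fin l => (i : ℕ) < h), m i) := by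
  constructor
  · intro H
    have h1 : 1 ≤ s + t := by
      have := H 1 (by omega)
      rw [partial_cons t m 0] at this
      have he : ∑ i ∈ Finset.univ.filter (fun i : Fin l => (i : ℕ) < 0), m i = 0 := by
        simp
      omega
    refine ⟨h1, fun h hh => ?_⟩
    have := H (h + 1) (by omega)
    rw [partial_cons t m h] at this
    omega
  · rintro ⟨h1, H⟩ h hh
    cases h with
    | zero => exact Nat.zero_le _
    | succ h' =>
      rw [partial_cons t m h']
      have := H h' (by omega)
      omega

lemma filter_sum_eq_Gf : ∀ (l : ℕ) (b : ℕ → ℕ) (s c : ℕ),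
    ∑ m ∈ (Finset.Nat.antidiagonalTuple l c).filter
        (fun m => ∀ h ≤ l, h ≤ s + ∑ i ∈ Finset.univ.filter (fun i : Fin l => (i:ℕ) < h), m i),
      ∏ i : Fin l, ((b (i:ℕ) + 1).choose (m i) : ℤ) = Gf l b s c := by
  intro l
  induction l with
  | zero =>
    intro b s c
    cases c with
    | zero => simp [Gf, Finset.Nat.antidiagonalTuple_zero_zero]
    | succ c => simp [Gf, Finset.Nat.antidiagonalTuple_zero_succ]
  | succ l IH =>
    intro b s c
    rw [Finset.sum_filter, sum_antidiagonalTuple_succ]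
    show (∑ t ∈ Finset.range (c+1), ∑ m ∈ Finset.Nat.antidiagonalTuple l (c - t), _) = _
    rw [show Gf (l+1) b s c = ∑ t ∈ Finset.range (c + 1),
        if 1 ≤ s + t then
          ((b 0 + 1).choose t : ℤ) * Gf l (fun i => b (i + 1)) (s + t - 1) (c - t)
        else 0 from rfl]
    refine Finset.sum_congr rfl (fun t ht => ?_)
    by_cases h1 : 1 ≤ s + t
    · rw [if_pos h1, ← IH (fun i => b (i + 1)) (s + t - 1) (c - t), Finset.sum_filter,
        Finset.mul_sum]
      refine Finset.sum_congr rfl (fun m hm => ?_)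
      have hprod : (∏ i : Fin (l+1), (((b (i:ℕ)) + 1).choose ((Fin.cons t m : Fin (l+1) → ℕ) i) : ℤ))
          = ((b 0 + 1).choose t : ℤ) * ∏ i : Fin l, ((b ((i:ℕ) + 1) + 1).choose (m i) : ℤ) := by
        rw [Fin.prod_univ_succ]
        simp [Fin.val_succ]
      by_cases h2 : ∀ h ≤ l, h ≤ (s + t - 1)
          + ∑ i ∈ Finset.univ.filter (fun i : Fin l => (i : ℕ) < h), m i
      · rw [if_pos ((cond_cons_iff s t m).mpr ⟨h1, h2⟩), if_pos h2, hprod]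
      · rw [if_neg (fun hc => h2 ((cond_cons_iff s t m).mp hc).2), if_neg h2, mul_zero]
    · rw [if_neg h1]
      refine Finset.sum_eq_zero (fun m hm => ?_)
      exact if_neg (fun hc => h1 ((cond_cons_iff s t m).mp hc).1)

lemma btFull (a : ℕ) : ∑ t ∈ Finset.range (a + 1), btTerm a t = 1 := by
  have h := add_pow (-(X : Polynomial ℤ)) (X + 1) a
  have h1 : (-(X : Polynomial ℤ) + (X + 1)) = 1 := by ring
  rw [h1, one_pow] at h
  rw [h]
  refine Finset.sum_congr rfl (fun t ht => ?_)
  unfold btTerm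
  rw [neg_pow]
  simp only [map_mul, map_pow, map_neg, map_one, Polynomial.C_eq_natCast]
  ring

lemma btDvd (q a : ℕ) :
    (Polynomial.X : Polynomial ℤ) ^ (q + 1) ∣ (∑ t ∈ Finset.range (q + 1), btTerm a t) - 1 := by
  rcases le_or_gt a q with hle | hlt
  · have : ∑ t ∈ Finset.range (q + 1), btTerm a t = ∑ t ∈ Finset.range (a + 1), btTerm a t := by
      symm
      refine Finset.sum_subset (by intro x hx; simp at hx ⊢; omega) (fun t ht hnt => ?_)
      simp only [Finset.mem_range, not_lt] at hnt
      have : a.choose t = 0 := Nat.choose_eq_zero_of_lt (by omega)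
      simp [btTerm, this]
    rw [this, btFull, sub_self]
    exact dvd_zero _
  · have hsplit : ∑ t ∈ Finset.range (a + 1), btTerm a t
        = ∑ t ∈ Finset.range (q + 1), btTerm a t + ∑ t ∈ Finset.Ico (q + 1) (a + 1), btTerm a t := by
      simp only [Finset.range_eq_Ico]
      rw [Finset.sum_Ico_consecutive _ (by omega : 0 ≤ q + 1) (by omega : q + 1 ≤ a + 1)]
    have : (∑ t ∈ Finset.range (q + 1), btTerm a t) - 1
        = -∑ t ∈ Finset.Ico (q + 1) (a + 1), btTerm a t := by
      rw [← btFull a, hsplit]; ring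
    rw [this]
    refine dvd_neg.mpr (Finset.dvd_sum (fun t ht => ?_))
    simp only [Finset.mem_Ico] at ht
    have : btTerm a t = X ^ (q+1) * (X ^ (t - (q+1)) * (Polynomial.C ((-1) ^ t * (a.choose t : ℤ))
        * (X + 1) ^ (a - t))) := by
      unfold btTerm
      rw [← mul_assoc, ← mul_assoc, ← pow_add]
      have : q + 1 + (t - (q + 1)) = t := by omega
      rw [this]; ring
    rw [this]
    exact Dvd.intro _ rfl

lemma Pp_rec (b : ℕ → ℕ) (s q : ℕ) :
    Pp b s q = (if s = 0 then (Polynomial.X + 1) ^ (b 0 + 1) else 0)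
      + ∑ t ∈ Finset.range (q + 1),
          (if 1 ≤ s + t then
            -(Wt b t) * Pp (fun i => b (i + 1)) (s + t - 1) (q - t)
          else 0) := by
  have hB : ∀ k ∈ Finset.Icc (max 1 s) (q + s), Ft b s k
      = ∑ t ∈ Finset.range (q + 1),
          (if 1 ≤ s + t ∧ s + t ≤ k then
            -(Wt b t) * Ft (fun i => b (i + 1)) (s + t - 1) (k - 1) else 0) := by
    intro k hk
    simp only [Finset.mem_Icc, max_le_iff] at hk
    obtain ⟨⟨hk1, hks⟩, hkq⟩ := hk
    obtain ⟨k', rfl⟩ : ∃ k', k = k' + 1 := ⟨k - 1, by omega⟩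
    have hstep : Ft b s (k' + 1) = ∑ t ∈ Finset.range (k' + 1 - s + 1),
        (if 1 ≤ s + t then
          Polynomial.C ((-1) ^ (k' + 1) * (((b 0 + 1).choose t : ℤ)
            * Gf k' (fun i => b (i + 1)) (s + t - 1) (k' + 1 - s - t)))
            * Polynomial.X ^ (k' + 1 - s) * (Polynomial.X + 1) ^ (Topf b s (k' + 1))
        else 0) := by
      unfold Ft
      rw [Gf_succ, Finset.mul_sum, map_sum, Finset.sum_mul, Finset.sum_mul]
      refine Finset.sum_congr rfl (fun t ht => ?_)
      split_ifs with h1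
      · rfl
      · simp
    rw [hstep]
    have hsub : Finset.range (k' + 1 - s + 1) ⊆ Finset.range (q + 1) := by
      intro x hx; simp only [Finset.mem_range] at hx ⊢; omega
    have hzero : ∀ x ∈ Finset.range (q + 1), x ∉ Finset.range (k' + 1 - s + 1) →
        (if 1 ≤ s + x ∧ s + x ≤ k' + 1 then
          -(Wt b x) * Ft (fun i => b (i + 1)) (s + x - 1) (k' + 1 - 1) else 0) = 0 := by
      intro x _ hx
      simp only [Finset.mem_range, not_lt] at hx
      rw [if_neg]
      omega
    rw [← Finset.sum_subset hsub hzero]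
    refine Finset.sum_congr rfl (fun t ht => ?_)
    simp only [Finset.mem_range] at ht
    have hst : s + t ≤ k' + 1 := by omega
    by_cases h1 : 1 ≤ s + t
    · rw [if_pos h1, if_pos ⟨h1, hst⟩]
      by_cases hbt : t ≤ b 0 + 1
      · have e2 : k' + 1 - s - t = k' - (s + t - 1) := by omega
        have e1 : k' + 1 - s = t + (k' - (s + t - 1)) := by omega
        have e3 : Topf b s (k' + 1)
            = (b 0 + 1 - t) + Topf (fun i => b (i + 1)) (s + t - 1) k' := by
          unfold Topf
          rw [Finset.sum_range_succ' b (k' + 1)]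
          have hbeta : (∑ i ∈ Finset.range (k' + 1), (fun i => b (i + 1)) i)
              = ∑ i ∈ Finset.range (k' + 1), b (i + 1) := rfl
          rw [hbeta]
          omega
        rw [e2, e1, e3, pow_add, pow_add]
        show _ = -(Wt b t) * Ft (fun i => b (i + 1)) (s + t - 1) (k' + 1 - 1)
        rw [show k' + 1 - 1 = k' from rfl]
        unfold Wt Ft
        simp only [map_mul, map_pow, map_neg, map_one]
        ring
      · have hch : (b 0 + 1).choose t = 0 := Nat.choose_eq_zero_of_lt (by omega)
        simp [Wt, hch]
    · rw [if_neg h1, if_neg (fun hc => h1 hc.1)]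
  have hA : Pp b s q = (if s = 0 then (Polynomial.X + 1) ^ (b 0 + 1) else 0)
      + ∑ k ∈ Finset.Icc (max 1 s) (q + s), Ft b s k := by
    cases s with
    | zero =>
      rw [if_pos rfl]
      unfold Pp
      have hins : Finset.Icc 0 (q + 0) = insert 0 (Finset.Icc (max 1 0) (q + 0)) := by
        ext x; simp only [Finset.mem_Icc, Finset.mem_insert]; omega
      rw [hins, Finset.sum_insert (by simp)]
      congr 1
      unfold Ft Topf
      simp [Gf]
    | succ s' =>
      rw [if_neg (Nat.succ_ne_zero s')]
      have hmax : max 1 (s' + 1) = s' + 1 := by omega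
      rw [hmax, zero_add]
      rfl
  rw [hA, Finset.sum_congr rfl hB, Finset.sum_comm]
  congr 1
  refine Finset.sum_congr rfl (fun t ht => ?_)
  simp only [Finset.mem_range] at ht
  by_cases h1 : 1 ≤ s + t
  · rw [if_pos h1]
    have hfil : ∀ k ∈ Finset.Icc (max 1 s) (q + s),
        (if 1 ≤ s + t ∧ s + t ≤ k then
          -(Wt b t) * Ft (fun i => b (i + 1)) (s + t - 1) (k - 1) else 0)
        = if s + t ≤ k then
            -(Wt b t) * Ft (fun i => b (i + 1)) (s + t - 1) (k - 1) else 0 := by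
      intro k _
      by_cases h : s + t ≤ k
      · rw [if_pos ⟨h1, h⟩, if_pos h]
      · rw [if_neg (fun hc => h hc.2), if_neg h]
    rw [Finset.sum_congr rfl hfil, ← Finset.sum_filter]
    have hfe : (Finset.Icc (max 1 s) (q + s)).filter (fun k => s + t ≤ k)
        = Finset.Icc (s + t) (q + s) := by
      ext x; simp only [Finset.mem_Icc, Finset.mem_filter]; omega
    rw [hfe]
    have hIcc : Finset.Icc (s + t) (q + s)
        = Finset.map (addRightEmbedding 1) (Finset.Icc (s + t - 1) (q - t + (s + t - 1))) := by
      rw [Finset.map_add_right_Icc]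
      congr 1
      · omega
      · omega
    rw [hIcc, Finset.sum_map]
    unfold Pp
    rw [Finset.mul_sum]
    refine Finset.sum_congr rfl (fun k' hk' => ?_)
    have : addRightEmbedding 1 k' = k' + 1 := rfl
    rw [this]
    rw [show k' + 1 - 1 = k' from rfl]
  · rw [if_neg h1]
    exact Finset.sum_eq_zero (fun k hk => if_neg (fun hc => h1 hc.1))

lemma core (q s : ℕ) (b : ℕ → ℕ)
    (IH : ∀ t, t ≤ q → 1 ≤ s + t → ∀ b' : ℕ → ℕ,
      (Polynomial.X : Polynomial ℤ) ^ (q - t + 1)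
        ∣ Pp b' (s + t - 1) (q - t) - Polynomial.C ((-1) ^ (s + t - 1))) :
    (Polynomial.X : Polynomial ℤ) ^ (q + 1) ∣ Pp b s q - Polynomial.C ((-1) ^ s) := by
  rw [Pp_rec]
  have hdvd1 : (Polynomial.X : Polynomial ℤ) ^ (q + 1) ∣
      (∑ t ∈ Finset.range (q + 1),
        (if 1 ≤ s + t then -(Wt b t) * Pp (fun i => b (i + 1)) (s + t - 1) (q - t) else 0))
      - (∑ t ∈ Finset.range (q + 1),
        (if 1 ≤ s + t then -(Wt b t) * Polynomial.C ((-1 : ℤ) ^ (s + t - 1)) else 0)) := by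
    rw [← Finset.sum_sub_distrib]
    refine Finset.dvd_sum (fun t ht => ?_)
    simp only [Finset.mem_range] at ht
    by_cases h1 : 1 ≤ s + t
    · rw [if_pos h1, if_pos h1]
      obtain ⟨r, hr⟩ := IH t (by omega) h1 (fun i => b (i + 1))
      refine ⟨-(Polynomial.C (((b 0 + 1).choose t : ℤ))
        * (Polynomial.X + 1) ^ (b 0 + 1 - t) * r), ?_⟩
      have hpow : (Polynomial.X : Polynomial ℤ) ^ t * Polynomial.X ^ (q - t + 1)
          = Polynomial.X ^ (q + 1) := by
        rw [← pow_add]; congr 1; omega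
      calc -(Wt b t) * Pp (fun i => b (i + 1)) (s + t - 1) (q - t)
            - -(Wt b t) * Polynomial.C ((-1 : ℤ) ^ (s + t - 1))
          = -(Wt b t) * (Pp (fun i => b (i + 1)) (s + t - 1) (q - t)
              - Polynomial.C ((-1 : ℤ) ^ (s + t - 1))) := by ring
        _ = -(Wt b t) * (Polynomial.X ^ (q - t + 1) * r) := by rw [hr]
        _ = (Polynomial.X ^ t * Polynomial.X ^ (q - t + 1))
              * (-(Polynomial.C (((b 0 + 1).choose t : ℤ))
                * (Polynomial.X + 1) ^ (b 0 + 1 - t) * r)) := by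
            unfold Wt; ring
        _ = _ := by rw [hpow]
    · simp [h1]
  have heq2 : (if s = 0 then (Polynomial.X + 1) ^ (b 0 + 1) else 0)
      + (∑ t ∈ Finset.range (q + 1),
          (if 1 ≤ s + t then -(Wt b t) * Polynomial.C ((-1 : ℤ) ^ (s + t - 1)) else 0))
      = Polynomial.C ((-1 : ℤ) ^ s) * ∑ t ∈ Finset.range (q + 1), btTerm (b 0 + 1) t := by
    cases s with
    | zero =>
      rw [if_pos rfl]
      have hterm : ∀ t ∈ Finset.range (q + 1),
          (if 1 ≤ 0 + t then -(Wt b t) * Polynomial.C ((-1 : ℤ) ^ (0 + t - 1)) else 0)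
          = btTerm (b 0 + 1) t - (if t = 0 then btTerm (b 0 + 1) 0 else 0) := by
        intro t _
        cases t with
        | zero => simp
        | succ t' =>
          rw [if_pos (by omega), if_neg (Nat.succ_ne_zero t'), sub_zero]
          have he : 0 + (t' + 1) - 1 = t' := by omega
          rw [he]
          unfold Wt btTerm
          simp only [map_mul, map_pow, map_neg, map_one]
          ring
      rw [Finset.sum_congr rfl hterm, Finset.sum_sub_distrib]
      have hsing : ∑ t ∈ Finset.range (q + 1), (if t = 0 then btTerm (b 0 + 1) 0 else 0)
          = btTerm (b 0 + 1) 0 := by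
        rw [Finset.sum_ite_eq' (Finset.range (q + 1)) 0 (fun _ => btTerm (b 0 + 1) 0)]
        simp
      rw [hsing]
      have hb0 : btTerm (b 0 + 1) 0 = (Polynomial.X + 1) ^ (b 0 + 1) := by
        unfold btTerm; simp
      rw [hb0]
      simp only [pow_zero, map_one, one_mul]
      ring
    | succ s' =>
      rw [if_neg (Nat.succ_ne_zero s'), zero_add, Finset.mul_sum]
      refine Finset.sum_congr rfl (fun t ht => ?_)
      rw [if_pos (by omega)]
      have he : s' + 1 + t - 1 = s' + t := by omega
      rw [he]
      unfold Wt btTerm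
      simp only [map_mul, map_pow, map_neg, map_one, pow_add, pow_succ]
      ring
  have hdvd3 : (Polynomial.X : Polynomial ℤ) ^ (q + 1)
      ∣ Polynomial.C ((-1 : ℤ) ^ s) * (∑ t ∈ Finset.range (q + 1), btTerm (b 0 + 1) t)
        - Polynomial.C ((-1 : ℤ) ^ s) := by
    obtain ⟨r, hr⟩ := btDvd q (b 0 + 1)
    refine ⟨Polynomial.C ((-1 : ℤ) ^ s) * r, ?_⟩
    calc Polynomial.C ((-1 : ℤ) ^ s) * (∑ t ∈ Finset.range (q + 1), btTerm (b 0 + 1) t)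
          - Polynomial.C ((-1 : ℤ) ^ s)
        = Polynomial.C ((-1 : ℤ) ^ s)
            * ((∑ t ∈ Finset.range (q + 1), btTerm (b 0 + 1) t) - 1) := by ring
      _ = Polynomial.C ((-1 : ℤ) ^ s) * (Polynomial.X ^ (q + 1) * r) := by rw [hr]
      _ = _ := by ring
  have hfinal : (if s = 0 then (Polynomial.X + 1) ^ (b 0 + 1) else 0)
      + (∑ t ∈ Finset.range (q + 1),
          (if 1 ≤ s + t then -(Wt b t) * Pp (fun i => b (i + 1)) (s + t - 1) (q - t) else 0))
      - Polynomial.C ((-1 : ℤ) ^ s)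
      = ((∑ t ∈ Finset.range (q + 1),
          (if 1 ≤ s + t then -(Wt b t) * Pp (fun i => b (i + 1)) (s + t - 1) (q - t) else 0))
        - (∑ t ∈ Finset.range (q + 1),
          (if 1 ≤ s + t then -(Wt b t) * Polynomial.C ((-1 : ℤ) ^ (s + t - 1)) else 0)))
      + (Polynomial.C ((-1 : ℤ) ^ s) * (∑ t ∈ Finset.range (q + 1), btTerm (b 0 + 1) t)
        - Polynomial.C ((-1 : ℤ) ^ s)) := by
    rw [← heq2]; ring
  rw [hfinal]
  exact dvd_add hdvd1 hdvd3

theorem MAIN : ∀ q s : ℕ, ∀ b : ℕ → ℕ,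
    (Polynomial.X : Polynomial ℤ) ^ (q + 1) ∣ Pp b s q - Polynomial.C ((-1) ^ s) := by
  intro q
  induction q using Nat.strong_induction_on with
  | _ q IHq =>
    intro s
    induction s with
    | zero =>
      intro b
      refine core q 0 b (fun t ht h1 b' => ?_)
      exact IHq (q - t) (by omega) (0 + t - 1) b'
    | succ s IHs =>
      intro b
      refine core q (s + 1) b (fun t ht h1 b' => ?_)
      rcases Nat.eq_zero_or_pos t with rfl | hpos
      · exact IHs b'
      · exact IHq (q - t) (by omega) (s + 1 + t - 1) b'

lemma MsetGf (k : ℕ) (b : ℕ → ℕ) :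
    ∑ m ∈ Mset k, ∏ i : Fin k, ((b (i : ℕ) + 1).choose (m i) : ℤ) = Gf k b 0 k := by
  rw [← filter_sum_eq_Gf k b 0 k]
  congr 1
  unfold Mset
  refine Finset.filter_congr (fun m hm => ?_)
  rw [Finset.Nat.mem_antidiagonalTuple] at hm
  have huniv : Finset.univ.filter (fun i : Fin k => (i : ℕ) < k) = Finset.univ :=
    Finset.filter_true_of_mem (fun i _ => i.isLt)
  constructor
  · intro H h hh
    rcases Nat.lt_or_ge h k with hlt | hge
    · rw [zero_add]; exact H h hlt
    · have hk : h = k := by omega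
      subst hk
      rw [zero_add, huniv, hm]
  · intro H h hh
    have := H h (by omega)
    omega

/-- Let `n ≥ 2`.  For every `q` with `1 ≤ q ≤ n - 1` and all positive integers
`n_1, …, n_{q+1}` (here `nv i = n_{i+1}` for `0 ≤ i ≤ q`), one has
`-C(n_1+1, q) + ∑_{k=1}^{q} (-1)^{k+1} ∑_{m ∈ M_k} C(n_1+1,m_1)⋯C(n_k+1,m_k)
  C(n_1+⋯+n_{k+1}+1, q-k) = 0`. -/

theorem binomial_identity (n : ℕ) (hn : 2 ≤ n) (q : ℕ) (hq1 : 1 ≤ q) (hq2 : q ≤ n - 1)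
    (nv : ℕ → ℕ) (hnv : ∀ i ≤ q, 0 < nv i) :
    -(((nv 0 + 1).choose q : ℤ)) +
      ∑ k ∈ Finset.Icc 1 q, (-1 : ℤ) ^ (k + 1) *
        ∑ m ∈ Mset k,
          (∏ i : Fin k, ((nv i + 1).choose (m i) : ℤ)) *
            (((∑ i ∈ Finset.range (k + 1), nv i) + 1).choose (q - k) : ℤ) = 0 := by
  obtain ⟨r, hr⟩ := MAIN q 0 nv
  have hco : (Pp nv 0 q).coeff q = 0 := by
    have h1 : (Pp nv 0 q - Polynomial.C ((-1 : ℤ) ^ 0)).coeff q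
        = (Polynomial.X ^ (q + 1) * r).coeff q := by rw [hr]
    rw [Polynomial.coeff_sub] at h1
    have h2 : (Polynomial.X ^ (q + 1) * r).coeff q = 0 := by
      rw [mul_comm, Polynomial.coeff_mul_X_pow']
      rw [if_neg (by omega)]
    have h3 : (Polynomial.C ((-1 : ℤ) ^ 0)).coeff q = 0 := by
      rw [Polynomial.coeff_C, if_neg (by omega)]
    rw [h2, h3] at h1
    linarith
  have hcoeff : (Pp nv 0 q).coeff q
      = ∑ k ∈ Finset.Icc 0 q, ((-1 : ℤ) ^ k * Gf k nv 0 k)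
          * ((Topf nv 0 k).choose (q - k) : ℤ) := by
    unfold Pp
    rw [Polynomial.finset_sum_coeff]
    refine Finset.sum_congr rfl (fun k hk => ?_)
    simp only [Finset.mem_Icc] at hk
    unfold Ft
    have hre : Polynomial.C ((-1 : ℤ) ^ k * Gf k nv 0 (k - 0)) * Polynomial.X ^ (k - 0)
        * (Polynomial.X + 1) ^ (Topf nv 0 k)
        = Polynomial.C ((-1 : ℤ) ^ k * Gf k nv 0 k)
          * ((Polynomial.X + 1) ^ (Topf nv 0 k) * Polynomial.X ^ k) := by
      rw [show k - 0 = k from rfl]; ring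
    rw [hre, Polynomial.coeff_C_mul, Polynomial.coeff_mul_X_pow', if_pos hk.2,
      Polynomial.coeff_X_add_one_pow]
  have hsplit : Finset.Icc 0 q = insert 0 (Finset.Icc 1 q) := by
    ext x; simp only [Finset.mem_Icc, Finset.mem_insert]; omega
  rw [hsplit, Finset.sum_insert (by simp)] at hcoeff
  have hterm0 : ((-1 : ℤ) ^ 0 * Gf 0 nv 0 0) * ((Topf nv 0 0).choose (q - 0) : ℤ)
      = ((nv 0 + 1).choose q : ℤ) := by
    have h0 : Topf nv 0 0 = nv 0 + 1 := by
      unfold Topf; rw [Finset.sum_range_one]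
    rw [h0]
    simp [Gf]
  rw [hterm0] at hcoeff
  have key : ((nv 0 + 1).choose q : ℤ)
      + ∑ k ∈ Finset.Icc 1 q, ((-1 : ℤ) ^ k * Gf k nv 0 k)
          * ((Topf nv 0 k).choose (q - k) : ℤ) = 0 := by
    rw [← hcoeff]; exact hco.symm ▸ hco
  have hgoal : ∑ k ∈ Finset.Icc 1 q, (-1 : ℤ) ^ (k + 1) *
        ∑ m ∈ Mset k,
          (∏ i : Fin k, ((nv i + 1).choose (m i) : ℤ)) *
            (((∑ i ∈ Finset.range (k + 1), nv i) + 1).choose (q - k) : ℤ)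
      = -∑ k ∈ Finset.Icc 1 q, ((-1 : ℤ) ^ k * Gf k nv 0 k)
          * ((Topf nv 0 k).choose (q - k) : ℤ) := by
    rw [← Finset.sum_neg_distrib]
    refine Finset.sum_congr rfl (fun k hk => ?_)
    rw [← Finset.sum_mul, MsetGf k nv]
    have htop : Topf nv 0 k = (∑ i ∈ Finset.range (k + 1), nv i) + 1 := by
      unfold Topf; omega
    rw [htop, pow_succ]
    ring
  rw [hgoal]
  linarith
end

section
/- For all m, n \ge 0, the co-product \Delta^{dif} of H^{dif} acts on the polynomials Q_m^{(n)}(a) by \Delta^{dif} Q_m^{(n)}(a) = \sum_{k=0}^{m} Q_{m-k}^{(n)}(a) \otimes Q_k^{(n+m-k)}(a). In particular the sub-algebra generated by the Q_m^{(n)}(a) is a sub-co-algebra of H^{dif}. -/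
open Finset

noncomputable section

/-- The non-commutative Hopf algebra of formal diffeomorphisms, as an algebra:
the free associative algebra over `ℂ` on generators `a 1, a 2, …`. -/
abbrev Hd : Type := FreeAlgebra ℂ {n : ℕ // 0 < n}

/-- The generators `a n`, with the convention `a 0 = 1`. -/
def a (n : ℕ) : Hd := if h : 0 < n then FreeAlgebra.ι ℂ ⟨n, h⟩ else 1

/-- `Q k m` is the polynomial `Q_m^{(k-1)}(a) = ∑_{j_0+⋯+j_{k-1} = m} a_{j_0} ⋯ a_{j_{k-1}}`,
the sum over `k`-tuples of non-negative integers with sum `m`.  In particular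
`Q (n+1) m` is `Q_m^{(n)}(a)` of the paper, and `Q 0 m = Q_m^{(-1)}(a) = δ_{m,0}`. -/
def Q (k m : ℕ) : Hd :=
  ∑ j ∈ Finset.Nat.antidiagonalTuple k m, (List.ofFn fun i => a (j i)).prod


open TensorProduct in
/-- The co-product `Δ^dif : H^dif → H^dif ⊗ H^dif`, defined on the generators by
`Δ^dif a_n = ∑_{k=0}^n a_k ⊗ Q_{n-k}^{(k)}(a)` and extended as an algebra homomorphism. -/
def Δdif : Hd →ₐ[ℂ] Hd ⊗[ℂ] Hd :=
  FreeAlgebra.lift ℂ fun i : {n : ℕ // 0 < n} =>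
    ∑ k ∈ Finset.range (i.1 + 1), a k ⊗ₜ[ℂ] Q (k + 1) (i.1 - k)

lemma a_zero : a 0 = 1 := rfl

lemma Q_zero (m : ℕ) : Q 0 m = if m = 0 then 1 else 0 := by
  cases m with
  | zero => simp [Q, Finset.Nat.antidiagonalTuple_zero_zero]
  | succ m => simp [Q, Finset.Nat.antidiagonalTuple_zero_succ]

lemma Q_one (m : ℕ) : Q 1 m = a m := by
  simp [Q, Finset.Nat.antidiagonalTuple_one, List.ofFn_succ]

lemma Q_succ (k m : ℕ) : Q (k + 1) m = ∑ x ∈ antidiagonal m, a x.1 * Q k x.2 := by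
  simp only [Q, Finset.mul_sum]
  rw [Finset.sum_sigma']
  refine Finset.sum_nbij' (fun t => ⟨(t 0, ∑ i, Fin.tail t i), Fin.tail t⟩)
    (fun p => Fin.cons p.1.1 p.2) ?_ ?_ ?_ ?_ ?_
  · intro t ht
    rw [Finset.Nat.mem_antidiagonalTuple] at ht
    simp only [Finset.mem_sigma, Finset.HasAntidiagonal.mem_antidiagonal, Finset.Nat.mem_antidiagonalTuple]
    refine ⟨?_, trivial⟩
    rw [← ht, Fin.sum_univ_succ]
    rfl
  · intro p hp
    simp only [Finset.mem_sigma, Finset.HasAntidiagonal.mem_antidiagonal, Finset.Nat.mem_antidiagonalTuple] at hp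
    rw [Finset.Nat.mem_antidiagonalTuple, Fin.sum_cons, hp.2, hp.1]
  · intro t _; exact Fin.cons_self_tail t
  · intro p hp
    obtain ⟨⟨x1, x2⟩, j⟩ := p
    simp only [Finset.mem_sigma, Finset.HasAntidiagonal.mem_antidiagonal, Finset.Nat.mem_antidiagonalTuple] at hp
    simp [Fin.tail_cons, hp.2]
  · intro t _
    rw [List.ofFn_succ]
    simp [Fin.tail]
lemma ad_assoc {M : Type*} [AddCommMonoid M] (m : ℕ) (f : ℕ → ℕ → ℕ → M) :
    ∑ x ∈ antidiagonal m, ∑ y ∈ antidiagonal x.2, f x.1 y.1 y.2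
      = ∑ x ∈ antidiagonal m, ∑ y ∈ antidiagonal x.1, f y.1 y.2 x.2 := by
  rw [Finset.sum_sigma', Finset.sum_sigma']
  refine Finset.sum_nbij' (fun p => ⟨(p.1.1 + p.2.1, p.2.2), (p.1.1, p.2.1)⟩)
    (fun p => ⟨(p.2.1, p.2.2 + p.1.2), (p.2.2, p.1.2)⟩) ?_ ?_ ?_ ?_ ?_
  · rintro ⟨⟨x1, x2⟩, ⟨y1, y2⟩⟩ hp
    simp only [Finset.mem_sigma, Finset.HasAntidiagonal.mem_antidiagonal] at hp ⊢
    obtain ⟨h1, h2⟩ := hp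
    exact ⟨by omega, trivial⟩
  · rintro ⟨⟨x1, x2⟩, ⟨y1, y2⟩⟩ hp
    simp only [Finset.mem_sigma, Finset.HasAntidiagonal.mem_antidiagonal] at hp ⊢
    obtain ⟨h1, h2⟩ := hp
    exact ⟨by omega, trivial⟩
  · rintro ⟨⟨x1, x2⟩, ⟨y1, y2⟩⟩ hp
    simp only [Finset.mem_sigma, Finset.HasAntidiagonal.mem_antidiagonal] at hp
    obtain ⟨h1, h2⟩ := hp
    refine Sigma.ext ?_ (heq_of_eq ?_) <;> simp only [Prod.mk.injEq] <;>
      constructor <;> first | trivial | omega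
  · rintro ⟨⟨x1, x2⟩, ⟨y1, y2⟩⟩ hp
    simp only [Finset.mem_sigma, Finset.HasAntidiagonal.mem_antidiagonal] at hp
    obtain ⟨h1, h2⟩ := hp
    refine Sigma.ext ?_ (heq_of_eq ?_) <;> simp only [Prod.mk.injEq] <;>
      constructor <;> first | trivial | omega
  · rintro ⟨⟨x1, x2⟩, ⟨y1, y2⟩⟩ _
    rfl

lemma Q_add (p q m : ℕ) : Q (p + q) m = ∑ x ∈ antidiagonal m, Q p x.1 * Q q x.2 := by
  induction p generalizing m with
  | zero =>
    rw [Nat.zero_add, Finset.sum_eq_single (0, m)]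
    · simp [Q_zero]
    · rintro ⟨b1, b2⟩ hb hne
      rw [Finset.HasAntidiagonal.mem_antidiagonal] at hb
      have hb1 : b1 ≠ 0 := by
        rintro rfl
        simp only [Nat.zero_add] at hb
        exact hne (by rw [hb])
      simp [Q_zero, hb1]
    · intro h
      exact absurd (Finset.HasAntidiagonal.mem_antidiagonal.mpr (by simp)) h
  | succ p ih =>
    have : p + 1 + q = (p + q) + 1 := by omega
    rw [this, Q_succ]
    simp only [ih]
    simp only [Finset.mul_sum]
    rw [ad_assoc m (fun u v w => a u * (Q p v * Q q w))]
    refine Finset.sum_congr rfl fun x hx => ?_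
    rw [Q_succ, Finset.sum_mul]
    refine Finset.sum_congr rfl fun y hy => ?_
    rw [mul_assoc]

lemma ad_assoc4 {M : Type*} [AddCommMonoid M] (m : ℕ) (f : ℕ → ℕ → ℕ → ℕ → M) :
    ∑ x ∈ antidiagonal m, ∑ k ∈ antidiagonal x.1, ∑ y ∈ antidiagonal x.2,
        f k.1 k.2 y.1 y.2
      = ∑ x ∈ antidiagonal m, ∑ u ∈ antidiagonal x.1, ∑ v ∈ antidiagonal x.2,
        f u.1 v.1 u.2 v.2 := by
  simp only [Finset.sum_sigma']
  refine Finset.sum_nbij'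
    (fun p => ⟨(p.2.1.1 + p.2.2.1, p.2.1.2 + p.2.2.2), (p.2.1.1, p.2.2.1), (p.2.1.2, p.2.2.2)⟩)
    (fun p => ⟨(p.2.1.1 + p.2.2.1, p.2.1.2 + p.2.2.2), (p.2.1.1, p.2.2.1), (p.2.1.2, p.2.2.2)⟩)
    ?_ ?_ ?_ ?_ ?_
  · rintro ⟨⟨x1, x2⟩, ⟨k1, k2⟩, ⟨y1, y2⟩⟩ hp
    simp only [Finset.mem_sigma, Finset.HasAntidiagonal.mem_antidiagonal] at hp ⊢
    obtain ⟨h1, h2, h3⟩ := hp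
    exact ⟨by omega, trivial, trivial⟩
  · rintro ⟨⟨x1, x2⟩, ⟨u1, u2⟩, ⟨v1, v2⟩⟩ hp
    simp only [Finset.mem_sigma, Finset.HasAntidiagonal.mem_antidiagonal] at hp ⊢
    obtain ⟨h1, h2, h3⟩ := hp
    exact ⟨by omega, trivial, trivial⟩
  · rintro ⟨⟨x1, x2⟩, ⟨k1, k2⟩, ⟨y1, y2⟩⟩ hp
    simp only [Finset.mem_sigma, Finset.HasAntidiagonal.mem_antidiagonal] at hp
    obtain ⟨h1, h2, h3⟩ := hp
    refine Sigma.ext ?_ (heq_of_eq (Sigma.ext ?_ (heq_of_eq ?_))) <;>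
      simp only [Prod.mk.injEq] <;> constructor <;> first | trivial | omega
  · rintro ⟨⟨x1, x2⟩, ⟨u1, u2⟩, ⟨v1, v2⟩⟩ hp
    simp only [Finset.mem_sigma, Finset.HasAntidiagonal.mem_antidiagonal] at hp
    obtain ⟨h1, h2, h3⟩ := hp
    refine Sigma.ext ?_ (heq_of_eq (Sigma.ext ?_ (heq_of_eq ?_))) <;>
      simp only [Prod.mk.injEq] <;> constructor <;> first | trivial | omega
  · rintro ⟨⟨x1, x2⟩, ⟨k1, k2⟩, ⟨y1, y2⟩⟩ _
    rfl


open TensorProduct in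
lemma Δa (n : ℕ) :
    Δdif (a n) = ∑ x ∈ antidiagonal n, a x.1 ⊗ₜ[ℂ] Q (x.1 + 1) x.2 := by
  cases n with
  | zero =>
    rw [a_zero, map_one]
    simp [Q_one, a_zero, Algebra.TensorProduct.one_def]
  | succ n =>
    rw [show a (n + 1) = FreeAlgebra.ι ℂ ⟨n + 1, Nat.succ_pos n⟩ from dif_pos _]
    rw [Δdif, FreeAlgebra.lift_ι_apply]
    rw [Finset.Nat.sum_antidiagonal_eq_sum_range_succ
      (fun i j => a i ⊗ₜ[ℂ] Q (i + 1) j) (n + 1)]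

open TensorProduct in
lemma key (N m : ℕ) :
    Δdif (Q N m) = ∑ x ∈ antidiagonal m, Q N x.1 ⊗ₜ[ℂ] Q (N + x.1) x.2 := by
  induction N generalizing m with
  | zero =>
    cases m with
    | zero =>
      rw [Q_zero]
      simp [Q_zero, Algebra.TensorProduct.one_def]
    | succ m =>
      rw [Q_zero]
      simp only [Nat.succ_ne_zero, if_false, map_zero]
      symm
      refine Finset.sum_eq_zero fun x hx => ?_
      rw [Finset.HasAntidiagonal.mem_antidiagonal] at hx
      rcases Nat.eq_zero_or_pos x.1 with h | h
      · have hx2 : x.2 = m + 1 := by omega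
        rw [h, hx2, Q_zero, Q_zero]
        simp
      · rw [Q_zero, if_neg (by omega)]
        simp
  | succ N ih =>
    rw [Q_succ, map_sum]
    simp only [map_mul, Δa, ih, Finset.sum_mul_sum,
      Algebra.TensorProduct.tmul_mul_tmul]
    rw [ad_assoc4 m (fun α β γ δ => (a α * Q N γ) ⊗ₜ[ℂ] (Q (α + 1) β * Q (N + γ) δ))]
    symm
    refine Finset.sum_congr rfl fun x hx => ?_
    rw [Q_succ, TensorProduct.sum_tmul]
    refine Finset.sum_congr rfl fun u hu => ?_
    rw [Finset.HasAntidiagonal.mem_antidiagonal] at hu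
    have h1 : N + 1 + x.1 = (u.1 + 1) + (N + u.2) := by omega
    rw [h1, Q_add, TensorProduct.tmul_sum]


open TensorProduct in
/-- `Δ^dif Q_m^{(n)}(a) = ∑_{k=0}^m Q_{m-k}^{(n)}(a) ⊗ Q_k^{(n+m-k)}(a)`; in particular the
sub-algebra generated by the `Q_m^{(n)}(a)` is a sub-co-algebra of `H^dif`. -/
theorem Δdif_Q (n m : ℕ) :
    Δdif (Q (n + 1) m) =
      ∑ k ∈ Finset.range (m + 1), Q (n + 1) (m - k) ⊗ₜ[ℂ] Q (n + m - k + 1) k := by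
  rw [key]
  rw [← Finset.Nat.sum_antidiagonal_swap
    (f := fun p => Q (n + 1) p.1 ⊗ₜ[ℂ] Q (n + 1 + p.1) p.2)]
  simp only [Prod.fst_swap, Prod.snd_swap]
  rw [Finset.Nat.sum_antidiagonal_eq_sum_range_succ
    (fun i j => Q (n + 1) j ⊗ₜ[ℂ] Q (n + 1 + j) i) m]
  refine Finset.sum_congr rfl fun k hk => ?_
  rw [Finset.mem_range] at hk
  have : n + 1 + (m - k) = n + m - k + 1 := by omega
  rw [this]


end
end
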